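/- Let x be a prime ideal of A_I and let 𝔉_x be the corresponding ultrafilter on I (under the correspondence sending an ultrafilter 𝔉 to the prime ideal {(a_i)_{i∈I} : {i : a_i ∈ m_A} ∈ 𝔉}). Then: (i) for every (b_i)_{i∈I} ∈ B_I there is a unique b ∈ B with {i ∈ I : b_i = b} ∈ 𝔉_x; (ii) the resulting map B_I → B, (b_i) ↦ b, is a ring homomorphism; and (iii) it induces an isomorphism A_{I,x} ⊗_{A_I} B_I ≅ B. -/

import Mathlib

/-!
STATEMENT 5: Fix a prime `p`, a finite commutative local ring `A` of characteristic `p`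
with maximal ideal `m_A`, and a (possibly non-commutative) `A`-algebra `B` of finite
cardinality.  For an index set `I`, let `A_I = ∏ A` and `B_I = ∏ B`.  Let `x` be a prime
ideal of `A_I` and let `𝔉_x` be the corresponding ultrafilter on `I` (characterized by
`a ∈ x ↔ {i : a i ∈ m_A} ∈ 𝔉_x`).  Then:
(i)  for every `(b_i) ∈ B_I` there is a unique `b ∈ B` with `{i : b_i = b} ∈ 𝔉_x`;
(ii) the resulting map `B_I → B` is a ring homomorphism;
(iii) it induces an isomorphism `A_{I,x} ⊗_{A_I} B_I ≅ B`.
-/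

open scoped TensorProduct

/-- The canonical ring homomorphism `∏ A →+* ∏ B` induced componentwise by `algebraMap A B`. -/
def piAlgRingHom (A B : Type) [CommRing A] [Ring B] [Algebra A B] (I : Type) :
    (I → A) →+* (I → B) :=
  Pi.ringHom fun i => (algebraMap A B).comp (Pi.evalRingHom (fun _ : I => A) i)

/-- `∏ B` as an algebra over `∏ A` (componentwise); the image is central. -/
noncomputable def piAlgebra (A B : Type) [CommRing A] [Ring B] [Algebra A B] (I : Type) :
    Algebra (I → A) (I → B) :=
  (piAlgRingHom A B I).toAlgebra' fun c x => by
    funext i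
    exact Algebra.commutes (c i) (x i)

namespace Stmt5Aux

variable {I β : Type} (𝔉 : Ultrafilter I)

theorem ulim_exists [Finite β] (b : I → β) : ∃ c, {i | b i = c} ∈ 𝔉 := by
  by_contra h
  push_neg at h
  have h1 : ∀ c : β, {i | b i ≠ c} ∈ 𝔉 := fun c => Ultrafilter.compl_mem_iff_notMem.mpr (h c)
  have h2 : (⋂ c : β, {i | b i ≠ c}) ∈ 𝔉 := Filter.iInter_mem.mpr h1
  have h3 : (⋂ c : β, {i | b i ≠ c}) = ∅ := by ext i; simp
  rw [h3] at h2
  exact Filter.empty_notMem (𝔉 : Filter I) h2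

noncomputable def ulim [Finite β] (b : I → β) : β := (ulim_exists 𝔉 b).choose

theorem ulim_spec [Finite β] (b : I → β) : {i | b i = ulim 𝔉 b} ∈ 𝔉 :=
  (ulim_exists 𝔉 b).choose_spec

theorem ulim_unique [Finite β] {b : I → β} {c : β} (h : {i | b i = c} ∈ 𝔉) :
    c = ulim 𝔉 b := by
  have h2 := ulim_spec 𝔉 b
  obtain ⟨i, hi1, hi2⟩ := Filter.nonempty_of_mem (Filter.inter_mem h h2)
  exact hi1 ▸ hi2

theorem ulim_const [Finite β] (c : β) : ulim 𝔉 (fun _ => c) = c := by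
  refine (ulim_unique 𝔉 ?_).symm
  exact Filter.univ_mem' (by simp)

noncomputable def ulimHom [Ring β] [Finite β] : (I → β) →+* β where
  toFun := ulim 𝔉
  map_one' := ulim_const 𝔉 1
  map_zero' := ulim_const 𝔉 0
  map_mul' b b' := by
    refine (ulim_unique 𝔉 ?_).symm
    filter_upwards [ulim_spec 𝔉 b, ulim_spec 𝔉 b'] with i h1 h2
    simp [h1, h2]
  map_add' b b' := by
    refine (ulim_unique 𝔉 ?_).symm
    filter_upwards [ulim_spec 𝔉 b, ulim_spec 𝔉 b'] with i h1 h2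
    simp [h1, h2]

theorem ulimHom_apply [Ring β] [Finite β] (b : I → β) : ulimHom 𝔉 b = ulim 𝔉 b := rfl

end Stmt5Aux

set_option maxHeartbeats 1000000 in
set_option synthInstance.maxHeartbeats 400000 in
theorem stmt_5
    (p : ℕ) (hp : p.Prime)
    (A : Type) [CommRing A] [Finite A] [IsLocalRing A] [CharP A p]
    (B : Type) [Ring B] [Algebra A B] [Finite B]
    (I : Type) (x : Ideal (I → A)) [x.IsPrime]
    (𝔉 : Ultrafilter I)
    (h𝔉 : ∀ a : I → A, a ∈ x ↔ {i : I | a i ∈ IsLocalRing.maximalIdeal A} ∈ 𝔉) :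
    -- (i) unique ultralimit
    (∀ b : I → B, ∃! c : B, {i : I | b i = c} ∈ 𝔉) ∧
    -- (ii) the ultralimit map is a ring homomorphism, and (iii) it induces an isomorphism
    -- `A_{I,x} ⊗_{A_I} B_I ≅ B`.
    (∃ φ : (I → B) →+* B,
      (∀ b : I → B, {i : I | b i = φ b} ∈ 𝔉) ∧
      (letI : Algebra (I → A) (I → B) := piAlgebra A B I
       ∃ e : (Localization.AtPrime x ⊗[I → A] (I → B)) ≃+* B,
        (∀ b : I → B, e (1 ⊗ₜ b) = φ b) ∧
        (∀ (a : I → A) (b : I → B),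
          e (algebraMap (I → A) (Localization.AtPrime x) a ⊗ₜ b)
            = φ (piAlgRingHom A B I a * b)))) := by
  classical
  refine ⟨fun b => ⟨Stmt5Aux.ulim 𝔉 b, Stmt5Aux.ulim_spec 𝔉 b,
      fun c hc => Stmt5Aux.ulim_unique 𝔉 hc⟩, ?_⟩
  refine ⟨Stmt5Aux.ulimHom 𝔉, fun b => Stmt5Aux.ulim_spec 𝔉 b, ?_⟩
  letI : Algebra (I → A) (I → B) := piAlgebra A B I
  set φA : (I → A) →+* A := Stmt5Aux.ulimHom 𝔉 with hφAdef
  set φB : (I → B) →+* B := Stmt5Aux.ulimHom 𝔉 with hφBdef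
  -- the ultralimit of an element outside `x` is a unit of `A`
  have hAune : ∀ a : I → A, a ∉ x → IsUnit (φA a) := by
    intro a ha
    have h1 : {i | a i ∈ IsLocalRing.maximalIdeal A}ᶜ ∈ 𝔉 :=
      Ultrafilter.compl_mem_iff_notMem.mpr (fun h => ha ((h𝔉 a).mpr h))
    obtain ⟨i, hi1, hi2⟩ :=
      Filter.nonempty_of_mem (Filter.inter_mem h1 (Stmt5Aux.ulim_spec 𝔉 a))
    have h3 : IsUnit (a i) := by
      by_contra h
      exact hi1 ((IsLocalRing.mem_maximalIdeal _).mpr h)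
    rw [show φA a = Stmt5Aux.ulim 𝔉 a from rfl, ← hi2]
    exact h3
  -- `B` as an algebra (hence module) over `∏ A` through the ultralimit
  letI algB : Algebra (I → A) B :=
    RingHom.toAlgebra' ((algebraMap A B).comp φA) (fun c y => Algebra.commutes (φA c) y)
  -- ultralimits interact with the componentwise operations
  have hφBalg : ∀ a : I → A, φB (piAlgRingHom A B I a) = algebraMap A B (φA a) := by
    intro a
    refine (Stmt5Aux.ulim_unique 𝔉 ?_).symm
    filter_upwards [Stmt5Aux.ulim_spec 𝔉 a] with i hi
    show algebraMap A B (a i) = algebraMap A B (φA a)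
    rw [hi]; rfl
  -- basic smul descriptions
  have hsmulLoc : ∀ (c : I → A) (l : Localization.AtPrime x),
      c • l = algebraMap (I → A) (Localization.AtPrime x) c * l :=
    fun c l => Algebra.smul_def c l
  have hsmulPi : ∀ (c : I → A) (b : I → B) (i : I),
      (c • b) i = algebraMap A B (c i) * b i :=
    fun c b i => Algebra.smul_def (c i) (b i)
  have hsmulB : ∀ (c : I → A) (y : B), c • y = algebraMap A B (φA c) * y :=
    fun c y => rfl
  have hφBsmul : ∀ (c : I → A) (b : I → B), φB (c • b) = algebraMap A B (φA c) * φB b := by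
    intro c b
    refine (Stmt5Aux.ulim_unique 𝔉 ?_).symm
    filter_upwards [Stmt5Aux.ulim_spec 𝔉 b, Stmt5Aux.ulim_spec 𝔉 c] with i h1 h2
    show (c • b) i = algebraMap A B (φA c) * φB b
    rw [hsmulPi]
    show algebraMap A B (c i) * b i = _
    rw [h1, h2]
    rfl
  -- the map from the localization through the center of `B`
  let ctr : A →+* Subring.center B :=
    (algebraMap A B).codRestrict (Subring.center B)
      (fun r => Subring.mem_center_iff.mpr (fun b => (Algebra.commutes r b).symm))
  let gC : (I → A) →+* Subring.center B := ctr.comp φA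
  have hunit : ∀ s : x.primeCompl, IsUnit (gC s) := fun s => (hAune s.1 s.2).map ctr
  let fC : Localization.AtPrime x →+* Subring.center B :=
    IsLocalization.lift (M := x.primeCompl) hunit
  let fR : Localization.AtPrime x →+* B := (Subring.center B).subtype.comp fC
  have hcent : ∀ (l : Localization.AtPrime x) (y : B), y * fR l = fR l * y :=
    fun l y => Subring.mem_center_iff.mp (fC l).2 y
  have hfRalg : ∀ c : I → A,
      fR (algebraMap (I → A) (Localization.AtPrime x) c) = algebraMap A B (φA c) := by
    intro c
    show (Subring.center B).subtype (fC (algebraMap (I → A) (Localization.AtPrime x) c))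
        = algebraMap A B (φA c)
    rw [IsLocalization.lift_eq hunit c]
    rfl
  -- the bilinear map and the induced map on the tensor product
  let bil : Localization.AtPrime x →ₗ[I → A] (I → B) →ₗ[I → A] B :=
    { toFun := fun l =>
        { toFun := fun b => fR l * φB b
          map_add' := fun b₁ b₂ => by
            show fR l * φB (b₁ + b₂) = fR l * φB b₁ + fR l * φB b₂
            rw [map_add, mul_add]
          map_smul' := fun c b => by
            show fR l * φB (c • b) = c • (fR l * φB b)
            rw [hφBsmul, hsmulB, ← mul_assoc, ← hcent, mul_assoc] }
      map_add' := fun l₁ l₂ => LinearMap.ext fun b => by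
        show fR (l₁ + l₂) * φB b = fR l₁ * φB b + fR l₂ * φB b
        rw [map_add, add_mul]
      map_smul' := fun c l => LinearMap.ext fun b => by
        show fR (c • l) * φB b = c • (fR l * φB b)
        rw [hsmulLoc, map_mul, hfRalg, hsmulB, mul_assoc] }
  let Φ : (Localization.AtPrime x ⊗[I → A] (I → B)) →ₗ[I → A] B := TensorProduct.lift bil
  have hΦtmul : ∀ (l : Localization.AtPrime x) (b : I → B),
      Φ (l ⊗ₜ[I → A] b) = fR l * φB b := fun l b => TensorProduct.lift.tmul l b
  have hΦmul : ∀ z w : Localization.AtPrime x ⊗[I → A] (I → B),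
      Φ (z * w) = Φ z * Φ w := by
    intro z w
    induction z using TensorProduct.induction_on with
    | zero => rw [zero_mul, map_zero, zero_mul]
    | tmul l₁ b₁ =>
      induction w using TensorProduct.induction_on with
      | zero => rw [mul_zero, map_zero, mul_zero]
      | tmul l₂ b₂ =>
        rw [Algebra.TensorProduct.tmul_mul_tmul, hΦtmul, hΦtmul, hΦtmul, map_mul, map_mul,
          mul_assoc, ← mul_assoc (fR l₂), ← hcent l₂ (φB b₁), mul_assoc (φB b₁), ← mul_assoc]
      | add w₁ w₂ h₁ h₂ => rw [mul_add, map_add, h₁, h₂, map_add, mul_add]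
    | add z₁ z₂ h₁ h₂ => rw [add_mul, map_add, h₁, h₂, map_add, add_mul]
  let Φ' : (Localization.AtPrime x ⊗[I → A] (I → B)) →+* B :=
    { toFun := Φ
      map_one' := by
        show Φ ((1 : Localization.AtPrime x) ⊗ₜ[I → A] (1 : I → B)) = 1
        rw [hΦtmul, map_one, map_one, one_mul]
      map_mul' := hΦmul
      map_zero' := Φ.map_zero
      map_add' := Φ.map_add }
  have hΦ'tmul : ∀ (l : Localization.AtPrime x) (b : I → B),
      Φ' (l ⊗ₜ[I → A] b) = fR l * φB b := hΦtmul
  -- indicator functions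
  let χ : Set I → (I → A) := fun U i => if i ∈ U then 1 else 0
  have h1m : (1 : A) ∉ IsLocalRing.maximalIdeal A :=
    fun h => ((IsLocalRing.mem_maximalIdeal 1).mp h) isUnit_one
  have hχ : ∀ U : Set I, U ∈ 𝔉 → χ U ∉ x := by
    intro U hU hmem
    rw [h𝔉] at hmem
    have hset : {i | χ U i ∈ IsLocalRing.maximalIdeal A} = Uᶜ := by
      ext i
      by_cases h : i ∈ U <;> simp [χ, h, h1m, Ideal.zero_mem]
    rw [hset] at hmem
    exact (Ultrafilter.compl_mem_iff_notMem.mp hmem) hU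
  have hmapzero : ∀ U : Set I, U ∈ 𝔉 → ∀ c : I → A, (∀ i ∈ U, c i = 0) →
      algebraMap (I → A) (Localization.AtPrime x) c = 0 := by
    intro U hU c hc
    have h1 : c * χ U = 0 := by
      funext i
      by_cases h : i ∈ U
      · simp [χ, h, hc i h]
      · simp [χ, h]
    have h2 : algebraMap (I → A) (Localization.AtPrime x) c *
        algebraMap (I → A) (Localization.AtPrime x) (χ U) = 0 := by
      rw [← map_mul, h1, map_zero]
    have h3 : IsUnit (algebraMap (I → A) (Localization.AtPrime x) (χ U)) :=
      IsLocalization.map_units _ (⟨χ U, hχ U hU⟩ : x.primeCompl)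
    exact (IsUnit.mul_left_eq_zero h3).mp h2
  -- key lemma: truncation along a large set does not change a pure tensor
  have hL1 : ∀ U : Set I, U ∈ 𝔉 → ∀ (l : Localization.AtPrime x) (b : I → B),
      (l ⊗ₜ[I → A] b) = l ⊗ₜ[I → A] (χ U • b) := by
    intro U hU l b
    have hz : algebraMap (I → A) (Localization.AtPrime x) (1 - χ U) = 0 :=
      hmapzero U hU _ (fun i hi => by simp [χ, hi])
    have h0 : l ⊗ₜ[I → A] ((1 - χ U) • b) = 0 := by
      rw [TensorProduct.tmul_smul, TensorProduct.smul_tmul', hsmulLoc, hz, zero_mul,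
        TensorProduct.zero_tmul]
    have hsum : χ U • b + (1 - χ U) • b = b := by
      rw [← add_smul]
      have : χ U + (1 - χ U) = 1 := by ring
      rw [this, one_smul]
    conv_lhs => rw [← hsum]
    rw [TensorProduct.tmul_add, h0, add_zero]
  -- every element of the tensor product is of the form `1 ⊗ b`
  have hL2 : ∀ z : Localization.AtPrime x ⊗[I → A] (I → B),
      ∃ b : I → B, z = (1 : Localization.AtPrime x) ⊗ₜ[I → A] b := by
    intro z
    induction z using TensorProduct.induction_on with
    | zero => exact ⟨0, (TensorProduct.tmul_zero _ _).symm⟩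
    | tmul l b =>
      obtain ⟨⟨a, s⟩, rfl⟩ := IsLocalization.mk'_surjective x.primeCompl l
      have e1 : (IsLocalization.mk' (Localization.AtPrime x) a s) ⊗ₜ[I → A] b
          = (IsLocalization.mk' (Localization.AtPrime x) 1 s) ⊗ₜ[I → A] (a • b) := by
        rw [IsLocalization.mk'_eq_mul_mk'_one, ← hsmulLoc, TensorProduct.smul_tmul]
      have hsU : {i | IsUnit ((s : I → A) i)} ∈ 𝔉 := by
        have h1 : {i | (s : I → A) i ∈ IsLocalRing.maximalIdeal A}ᶜ ∈ 𝔉 :=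
          Ultrafilter.compl_mem_iff_notMem.mpr (fun h => s.2 ((h𝔉 _).mpr h))
        refine Filter.mem_of_superset h1 (fun i hi => ?_)
        by_contra h
        exact hi ((IsLocalRing.mem_maximalIdeal _).mpr h)
      set U := {i | IsUnit ((s : I → A) i)} with hUdef
      let t : I → A := fun i => if h : IsUnit ((s : I → A) i) then ((h.unit⁻¹ : Aˣ) : A) else 1
      have hχst : χ U = (s : I → A) * (t * χ U) := by
        funext i
        by_cases h : i ∈ U
        · have hh : IsUnit ((s : I → A) i) := h
          show (if i ∈ U then (1:A) else 0)
              = (s : I → A) i * (t i * (if i ∈ U then (1:A) else 0))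
          rw [if_pos h, mul_one]
          show (1 : A) = (s : I → A) i * (if h : IsUnit ((s : I → A) i)
              then ((h.unit⁻¹ : Aˣ) : A) else 1)
          rw [dif_pos hh, hh.mul_val_inv]
        · show (if i ∈ U then (1:A) else 0)
              = (s : I → A) i * (t i * (if i ∈ U then (1:A) else 0))
          rw [if_neg h, mul_zero, mul_zero]
      have e2 : (IsLocalization.mk' (Localization.AtPrime x) 1 s) ⊗ₜ[I → A] (χ U • (a • b))
          = (1 : Localization.AtPrime x) ⊗ₜ[I → A] ((t * χ U) • (a • b)) := by
        conv_lhs => rw [hχst]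
        rw [mul_smul, TensorProduct.tmul_smul, TensorProduct.smul_tmul', hsmulLoc,
          IsLocalization.mk'_spec', map_one]
      exact ⟨(t * χ U) • (a • b), by rw [e1, hL1 U hsU _ (a • b), e2]⟩
    | add z₁ z₂ h₁ h₂ =>
      obtain ⟨b₁, rfl⟩ := h₁
      obtain ⟨b₂, rfl⟩ := h₂
      exact ⟨b₁ + b₂, (TensorProduct.tmul_add _ _ _).symm⟩
  -- bijectivity
  have hSurj : Function.Surjective Φ' := by
    intro c
    refine ⟨(1 : Localization.AtPrime x) ⊗ₜ (fun _ => c), ?_⟩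
    rw [hΦ'tmul, map_one, one_mul]
    exact Stmt5Aux.ulim_const 𝔉 c
  have hInj : Function.Injective Φ' := by
    rw [injective_iff_map_eq_zero]
    intro z hz
    obtain ⟨b, rfl⟩ := hL2 z
    rw [hΦ'tmul, map_one, one_mul] at hz
    have hV : {i | b i = 0} ∈ 𝔉 := by
      have h := Stmt5Aux.ulim_spec 𝔉 b
      rw [show Stmt5Aux.ulim 𝔉 b = 0 from hz] at h
      exact h
    have hb0 : χ {i | b i = 0} • b = 0 := by
      funext i
      rw [hsmulPi]
      show algebraMap A B (χ {i | b i = 0} i) * b i = (0 : I → B) i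
      by_cases h : b i = 0
      · rw [h, mul_zero]; rfl
      · have h2 : χ {i | b i = 0} i = 0 := if_neg h
        rw [h2, map_zero, zero_mul]; rfl
    rw [hL1 _ hV 1 b, hb0, TensorProduct.tmul_zero]
  refine ⟨RingEquiv.ofBijective Φ' ⟨hInj, hSurj⟩, fun b => ?_, fun a b => ?_⟩
  · show Φ' ((1 : Localization.AtPrime x) ⊗ₜ b) = φB b
    rw [hΦ'tmul, map_one, one_mul]
  · show Φ' (algebraMap (I → A) (Localization.AtPrime x) a ⊗ₜ b) = φB (piAlgRingHom A B I a * b)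
    rw [hΦ'tmul, hfRalg, map_mul, hφBalg a]
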